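/- Let μ₊, μ₋ > 0 with μ₊ > μ₋, and w₊ < w₋ real numbers (so that jump w = w₊ − w₋ < 0 and jump μ = μ₊ − μ₋ > 0). Define W : ℝ² → ℝ by W(F) = min(μ₊|F|²/2 + w₊, μ₋|F|²/2 + w₋), and ε₊ = √(−2(w₊−w₋)μ₋/((μ₊−μ₋)μ₊)), ε₋ = √(−2(w₊−w₋)μ₊/((μ₊−μ₋)μ₋)). Then the function G(F) defined as μ₊|F|²/2 + w₊ for |F| ≤ ε₊, as |F|·√(−2(w₊−w₋)μ₊μ₋/(μ₊−μ₋)) + (μ₊w₊−μ₋w₋)/(μ₊−μ₋) for ε₊ ≤ |F| ≤ ε₋, and as μ₋|F|²/2 + w₋ for |F| ≥ ε₋, is convex, satisfies G ≤ W, and G = W on {|F| ≤ ε₊} ∪ {|F| ≥ ε₋}. -/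

import Mathlib

/-- Anti-plane shear double-well energy density on `ℝ²`. -/
noncomputable def Wap (μp μm wp wm : ℝ) (F : EuclideanSpace ℝ (Fin 2)) : ℝ :=
  min (μp / 2 * ‖F‖ ^ 2 + wp) (μm / 2 * ‖F‖ ^ 2 + wm)

/-- Inner radius of the binodal annulus. -/
noncomputable def εp (μp μm wp wm : ℝ) : ℝ :=
  Real.sqrt (-2 * (wp - wm) * μm / ((μp - μm) * μp))

/-- Outer radius of the binodal annulus. -/
noncomputable def εm (μp μm wp wm : ℝ) : ℝ :=
  Real.sqrt (-2 * (wp - wm) * μp / ((μp - μm) * μm))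

/-- Candidate convex envelope of the anti-plane shear energy. -/
noncomputable def Gap (μp μm wp wm : ℝ) (F : EuclideanSpace ℝ (Fin 2)) : ℝ :=
  if ‖F‖ ≤ εp μp μm wp wm then μp / 2 * ‖F‖ ^ 2 + wp
  else if ‖F‖ ≤ εm μp μm wp wm then
    ‖F‖ * Real.sqrt (-2 * (wp - wm) * μp * μm / (μp - μm)) +
      (μp * wp - μm * wm) / (μp - μm)
  else μm / 2 * ‖F‖ ^ 2 + wm

open Set

lemma gEq (μp μm wp wm A B s c : ℝ) (hAB : A ≤ B)
    (hs1 : s = μp * A) (hs2 : s = μm * B)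
    (hc : c = wp - μp / 2 * A ^ 2) (hwm : wm = c + μm / 2 * B ^ 2) (r : ℝ) :
    (if r ≤ A then μp / 2 * r ^ 2 + wp else if r ≤ B then r * s + c
      else μm / 2 * r ^ 2 + wm)
      = r * s + c + μp / 2 * (max (A - r) 0) ^ 2 + μm / 2 * (max (r - B) 0) ^ 2 := by
  split_ifs with h1 h2
  · rw [max_eq_left (by linarith), max_eq_right (by linarith)]
    rw [hs1, hc]; ring
  · rw [max_eq_right (by linarith), max_eq_right (by linarith)]
    ring
  · rw [max_eq_right (by linarith), max_eq_left (by linarith)]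
    rw [hs2, hwm, hc]; ring

lemma gConv (A B s c μp μm : ℝ) (hμp : 0 ≤ μp) (hμm : 0 ≤ μm) :
    ConvexOn ℝ Set.univ
      (fun r : ℝ => r * s + c + μp / 2 * (max (A - r) 0) ^ 2
        + μm / 2 * (max (r - B) 0) ^ 2) := by
  have h1 : ConvexOn ℝ Set.univ (fun r : ℝ => r * s + c) := by
    refine ⟨convex_univ, ?_⟩
    intro x _ y _ a b ha hb hab
    simp only [smul_eq_mul]
    exact le_of_eq (by linear_combination (-c) * hab)
  have hmax1 : ConvexOn ℝ Set.univ (fun r : ℝ => max (A - r) 0) := by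
    have hf : ConvexOn ℝ Set.univ (fun r : ℝ => A - r) := by
      refine ⟨convex_univ, ?_⟩
      intro x _ y _ a b ha hb hab
      simp only [smul_eq_mul]
      exact le_of_eq (by linear_combination (-A) * hab)
    exact (hf.sup (convexOn_const (0:ℝ) convex_univ)).congr
      (fun x _ => by simp [Pi.sup_apply])
  have hmax2 : ConvexOn ℝ Set.univ (fun r : ℝ => max (r - B) 0) := by
    have hf : ConvexOn ℝ Set.univ (fun r : ℝ => r - B) := by
      refine ⟨convex_univ, ?_⟩
      intro x _ y _ a b ha hb hab
      simp only [smul_eq_mul]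
      exact le_of_eq (by linear_combination B * hab)
    exact (hf.sup (convexOn_const (0:ℝ) convex_univ)).congr
      (fun x _ => by simp [Pi.sup_apply])
  have hq1 : ConvexOn ℝ Set.univ (fun r : ℝ => (max (A - r) 0) ^ 2) :=
    (hmax1.pow (fun x _ => le_max_right _ _) 2).congr
      (fun x _ => by simp [Pi.pow_apply])
  have hq2 : ConvexOn ℝ Set.univ (fun r : ℝ => (max (r - B) 0) ^ 2) :=
    (hmax2.pow (fun x _ => le_max_right _ _) 2).congr
      (fun x _ => by simp [Pi.pow_apply])
  have hq1' : ConvexOn ℝ Set.univ (fun r : ℝ => μp / 2 * (max (A - r) 0) ^ 2) :=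
    (hq1.smul (show (0:ℝ) ≤ μp / 2 by linarith)).congr
      (fun x _ => by simp [Pi.smul_apply, smul_eq_mul])
  have hq2' : ConvexOn ℝ Set.univ (fun r : ℝ => μm / 2 * (max (r - B) 0) ^ 2) :=
    (hq2.smul (show (0:ℝ) ≤ μm / 2 by linarith)).congr
      (fun x _ => by simp [Pi.smul_apply, smul_eq_mul])
  exact ((h1.add hq1').add hq2').congr (fun x _ => by simp [Pi.add_apply])

lemma gMono (μp μm wp wm A B s c : ℝ) (hμp : 0 < μp) (hμm : 0 < μm)
    (hA0 : 0 ≤ A) (hAB : A ≤ B)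
    (hs1 : s = μp * A) (hs2 : s = μm * B)
    (hc : c = wp - μp / 2 * A ^ 2) (hwm : wm = c + μm / 2 * B ^ 2) :
    MonotoneOn (fun r : ℝ => if r ≤ A then μp / 2 * r ^ 2 + wp
      else if r ≤ B then r * s + c else μm / 2 * r ^ 2 + wm) (Set.Ici 0) := by
  have hB0 : 0 ≤ B := le_trans hA0 hAB
  subst hs1
  subst hc
  subst hwm
  intro a ha b hb hab
  simp only [Set.mem_Ici] at ha hb
  dsimp only
  by_cases h1 : a ≤ A
  · rw [if_pos h1]
    by_cases h2 : b ≤ A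
    · rw [if_pos h2]
      nlinarith [mul_nonneg hμp.le (mul_nonneg (add_nonneg ha hb) (sub_nonneg.2 hab))]
    · rw [if_neg h2]
      have hAb : A ≤ b := le_of_not_ge h2
      by_cases h3 : b ≤ B
      · rw [if_pos h3]
        nlinarith [mul_nonneg hμp.le (mul_nonneg (sub_nonneg.2 hAb) hA0),
          mul_nonneg hμp.le (mul_nonneg (sub_nonneg.2 h1) (add_nonneg hA0 ha))]
      · rw [if_neg h3]
        have hBb : B ≤ b := le_of_not_ge h3
        have e1 : μp * A * A = μm * B * A := by linear_combination A * hs2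
        nlinarith [mul_nonneg hμp.le (mul_nonneg (sub_nonneg.2 h1) (add_nonneg hA0 ha)),
          mul_nonneg (mul_nonneg hμm.le hB0) (sub_nonneg.2 hAB),
          mul_nonneg hμm.le (mul_nonneg (sub_nonneg.2 hBb) (add_nonneg hb hB0)), e1]
  · rw [if_neg h1]
    have hAa : A ≤ a := le_of_not_ge h1
    by_cases h3 : a ≤ B
    · rw [if_pos h3]
      have h2 : ¬ b ≤ A := fun hh => h1 (le_trans hab hh)
      rw [if_neg h2]
      by_cases h4 : b ≤ B
      · rw [if_pos h4]
        nlinarith [mul_nonneg (mul_nonneg hμp.le hA0) (sub_nonneg.2 hab)]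
      · rw [if_neg h4]
        have hBb : B ≤ b := le_of_not_ge h4
        have e2 : a * (μp * A) = a * (μm * B) := by linear_combination a * hs2
        nlinarith [e2, mul_nonneg (mul_nonneg hμm.le hB0) (sub_nonneg.2 h3),
          mul_nonneg hμm.le (mul_nonneg (sub_nonneg.2 hBb) (add_nonneg hb hB0))]
    · rw [if_neg h3]
      have h2 : ¬ b ≤ A := fun hh => h1 (le_trans hab hh)
      have h4 : ¬ b ≤ B := fun hh => h3 (le_trans hab hh)
      rw [if_neg h2, if_neg h4]
      nlinarith [mul_nonneg hμm.le (mul_nonneg (add_nonneg ha hb) (sub_nonneg.2 hab))]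

set_option maxHeartbeats 1000000 in
theorem stmt9 (μp μm wp wm : ℝ) (hμm : 0 < μm) (hμ : μm < μp) (hw : wp < wm) :
    ConvexOn ℝ Set.univ (Gap μp μm wp wm) ∧
    (∀ F, Gap μp μm wp wm F ≤ Wap μp μm wp wm F) ∧
    (∀ F : EuclideanSpace ℝ (Fin 2),
      ‖F‖ ≤ εp μp μm wp wm ∨ εm μp μm wp wm ≤ ‖F‖ →
        Gap μp μm wp wm F = Wap μp μm wp wm F) := by
  have hμp : 0 < μp := hμm.trans hμ
  have hΔμ : 0 < μp - μm := sub_pos.2 hμ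
  have hΔ : 0 < wm - wp := sub_pos.2 hw
  obtain ⟨A, hAdef⟩ : ∃ x : ℝ, x = εp μp μm wp wm := ⟨_, rfl⟩
  obtain ⟨B, hBdef⟩ : ∃ x : ℝ, x = εm μp μm wp wm := ⟨_, rfl⟩
  obtain ⟨s, hsdef⟩ : ∃ x : ℝ,
    x = Real.sqrt (-2 * (wp - wm) * μp * μm / (μp - μm)) := ⟨_, rfl⟩
  obtain ⟨c, hcdef⟩ : ∃ x : ℝ, x = (μp * wp - μm * wm) / (μp - μm) := ⟨_, rfl⟩
  have hargA : 0 ≤ -2 * (wp - wm) * μm / ((μp - μm) * μp) :=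
    div_nonneg (by nlinarith) (by positivity)
  have hargApos : 0 < -2 * (wp - wm) * μm / ((μp - μm) * μp) :=
    div_pos (by nlinarith) (by positivity)
  have hargB : 0 ≤ -2 * (wp - wm) * μp / ((μp - μm) * μm) :=
    div_nonneg (by nlinarith) (by positivity)
  have hA0 : 0 ≤ A := hAdef ▸ Real.sqrt_nonneg _
  have hB0 : 0 ≤ B := hBdef ▸ Real.sqrt_nonneg _
  have hA2 : A ^ 2 = -2 * (wp - wm) * μm / ((μp - μm) * μp) := by
    rw [hAdef]; unfold εp; exact Real.sq_sqrt hargA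
  have hB2 : B ^ 2 = -2 * (wp - wm) * μp / ((μp - μm) * μm) := by
    rw [hBdef]; unfold εm; exact Real.sq_sqrt hargB
  have hApos : 0 < A := by
    rw [hAdef]; unfold εp; exact Real.sqrt_pos.2 hargApos
  have hs1 : s = μp * A := by
    rw [hsdef, hAdef]; unfold εp
    rw [show -2 * (wp - wm) * μp * μm / (μp - μm)
        = μp ^ 2 * (-2 * (wp - wm) * μm / ((μp - μm) * μp)) by
      field_simp]
    rw [Real.sqrt_mul (sq_nonneg μp), Real.sqrt_sq hμp.le]
  have hs2 : s = μm * B := by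
    rw [hsdef, hBdef]; unfold εm
    rw [show -2 * (wp - wm) * μp * μm / (μp - μm)
        = μm ^ 2 * (-2 * (wp - wm) * μp / ((μp - μm) * μm)) by
      field_simp]
    rw [Real.sqrt_mul (sq_nonneg μm), Real.sqrt_sq hμm.le]
  have hμpA : μp * A = μm * B := by rw [← hs1, hs2]
  have hAB : A ≤ B := by nlinarith only [mul_nonneg hΔμ.le hB0, hμpA, hμp]
  have hABlt : A < B := by nlinarith only [mul_pos hΔμ hApos, hμpA, hμm]
  have hA2' : (μp - μm) * μp * A ^ 2 = 2 * (wm - wp) * μm := by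
    rw [hA2]; field_simp; ring
  have hB2' : (μp - μm) * μm * B ^ 2 = 2 * (wm - wp) * μp := by
    rw [hB2]; field_simp; ring
  have hc' : c = wp - μp / 2 * A ^ 2 := by
    rw [hcdef, hA2]; field_simp; ring
  have hwm' : wm = c + μm / 2 * B ^ 2 := by
    rw [hcdef, hB2]; field_simp; ring
  obtain ⟨P, hP⟩ : ∃ P : ℝ → ℝ, ∀ r, P r = if r ≤ A then μp / 2 * r ^ 2 + wp
      else if r ≤ B then r * s + c else μm / 2 * r ^ 2 + wm := ⟨_, fun r => rfl⟩
  have hGap : ∀ F : EuclideanSpace ℝ (Fin 2), Gap μp μm wp wm F = P ‖F‖ := by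
    intro F
    rw [hP]
    simp only [Gap]
    rw [← hAdef, ← hBdef, ← hsdef, ← hcdef]
  have hWap : ∀ F : EuclideanSpace ℝ (Fin 2), Wap μp μm wp wm F
      = min (μp / 2 * ‖F‖ ^ 2 + wp) (μm / 2 * ‖F‖ ^ 2 + wm) := fun F => rfl
  have hmono : MonotoneOn P (Set.Ici 0) := by
    intro a ha b hb hab
    rw [hP, hP]
    exact gMono μp μm wp wm A B s c hμp hμm hA0 hAB hs1 hs2 hc' hwm' ha hb hab
  have hPcvx : ConvexOn ℝ Set.univ P :=
    (gConv A B s c μp μm hμp.le hμm.le).congr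
      (fun r _ => ((hP r).trans (gEq μp μm wp wm A B s c hAB hs1 hs2 hc' hwm' r)).symm)
  have hPlow : ∀ r : ℝ, 0 ≤ r →
      P r ≤ min (μp / 2 * r ^ 2 + wp) (μm / 2 * r ^ 2 + wm) := by
    intro r hr
    rw [hP]
    have e3 : r * s = r * (μp * A) := by linear_combination r * hs1
    have e4 : r * s = r * (μm * B) := by linear_combination r * hs2
    split_ifs with h1 h2
    · refine le_min le_rfl ?_
      nlinarith only [hA2', mul_nonneg (mul_nonneg hΔμ.le hμp.le)
        (mul_nonneg (sub_nonneg.2 h1) (add_nonneg hA0 hr)), hμp, hΔ, hΔμ, hμm, hμ]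
    · refine le_min ?_ ?_
      · nlinarith only [mul_nonneg hμp.le (sq_nonneg (r - A)), e3, hc']
      · nlinarith only [mul_nonneg hμm.le (sq_nonneg (r - B)), e4, hwm']
    · have hBr : B ≤ r := le_of_not_ge h2
      refine le_min ?_ le_rfl
      nlinarith only [hB2', mul_nonneg (mul_nonneg hΔμ.le hμm.le)
        (mul_nonneg (sub_nonneg.2 hBr) (add_nonneg hB0 hr)), hμp, hΔ, hΔμ, hμm, hμ]
  have hPeq : ∀ r : ℝ, 0 ≤ r → (r ≤ A ∨ B ≤ r) →
      P r = min (μp / 2 * r ^ 2 + wp) (μm / 2 * r ^ 2 + wm) := by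
    intro r hr h
    rw [hP]
    rcases h with h | h
    · rw [if_pos h]
      refine (min_eq_left ?_).symm
      nlinarith only [hA2', mul_nonneg (mul_nonneg hΔμ.le hμp.le)
        (mul_nonneg (sub_nonneg.2 h) (add_nonneg hA0 hr)), hμp, hΔ, hΔμ, hμm, hμ]
    · have h1 : ¬ r ≤ A := fun hh => absurd hABlt (not_lt.2 (le_trans h hh))
      rw [if_neg h1]
      by_cases h2 : r ≤ B
      · rw [if_pos h2]
        have hrB : r = B := le_antisymm h2 h
        rw [hrB]
        rw [min_eq_right (by nlinarith only [hB2', hμm, hΔ, hΔμ, hμp, hμ])]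
        linear_combination B * hs2 - hwm'
      · rw [if_neg h2]
        refine (min_eq_right ?_).symm
        have hBr : B ≤ r := le_of_not_ge h2
        nlinarith only [hB2', mul_nonneg (mul_nonneg hΔμ.le hμm.le)
          (mul_nonneg (sub_nonneg.2 hBr) (add_nonneg hB0 hr)), hμp, hΔ, hΔμ, hμm, hμ]
  refine ⟨⟨convex_univ, ?_⟩, ?_, ?_⟩
  · intro x _ y _ a b ha hb hab
    simp only [hGap, smul_eq_mul]
    have tri : ‖a • x + b • y‖ ≤ a * ‖x‖ + b * ‖y‖ := by
      calc ‖a • x + b • y‖ ≤ ‖a • x‖ + ‖b • y‖ := norm_add_le _ _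
        _ = a * ‖x‖ + b * ‖y‖ := by
            rw [norm_smul, norm_smul, Real.norm_of_nonneg ha, Real.norm_of_nonneg hb]
    calc P ‖a • x + b • y‖ ≤ P (a * ‖x‖ + b * ‖y‖) :=
          hmono (Set.mem_Ici.2 (norm_nonneg _))
            (Set.mem_Ici.2 (by positivity)) tri
      _ ≤ a * P ‖x‖ + b * P ‖y‖ := by
          have := hPcvx.2 (Set.mem_univ ‖x‖) (Set.mem_univ ‖y‖) ha hb hab
          simpa [smul_eq_mul] using this
  · intro F
    rw [hGap, hWap]
    exact hPlow ‖F‖ (norm_nonneg F)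
  · intro F hF
    rw [hGap, hWap]
    refine hPeq ‖F‖ (norm_nonneg F) ?_
    rcases hF with h | h
    · exact Or.inl (hAdef ▸ h)
    · exact Or.inr (hBdef ▸ h)
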